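/- Let W₁, W₂ ∈ ℝ^{Z_N}, extended periodically to ℤ-indexed sequences. Then H(W₁)·H(W₂) = H(T(W₂,W₁))·H(D(W₂,W₁)) as ℤ×ℤ matrices, where H(x)_{i,j} = exp(x_i + ... + x_j) for i ≤ j and 0 otherwise, and T, D are the positive-temperature periodic Pitman maps. -/

import Mathlib

open Finset Real

variable {N : ℕ}

/-- Cyclic sum `Y_{[i,j]}` (closed-closed), going from `i` around to `j`. -/
noncomputable def cycCC [NeZero N] (Y : ZMod N → ℝ) (i j : ZMod N) : ℝ :=
  ∑ ℓ ∈ Finset.range ((j - i).val + 1), Y (i + ℓ)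

/-- Cyclic sum `Y_{(i,j]}` (open-closed), with `Y_{(i,i]} = 0`. -/
noncomputable def cycOC [NeZero N] (Y : ZMod N → ℝ) (i j : ZMod N) : ℝ :=
  ∑ ℓ ∈ Finset.range ((j - i).val), Y (i + 1 + ℓ)

/-- `Y_ℓ = X₂(ℓ+1) − X₁(ℓ)`. -/
noncomputable def Yv [NeZero N] (X₁ X₂ : ZMod N → ℝ) : ZMod N → ℝ :=
  fun ℓ => X₂ (ℓ + 1) - X₁ ℓ

/-- Positive-temperature periodic Pitman map `T`. -/
noncomputable def Tmap [NeZero N] (X₁ X₂ : ZMod N → ℝ) (i : ZMod N) : ℝ :=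
  X₁ (i - 1) + Real.log ((∑ j : ZMod N, Real.exp (cycCC (Yv X₁ X₂) (i - 1) j)) /
    (∑ j : ZMod N, Real.exp (cycCC (Yv X₁ X₂) i j)))

/-- Positive-temperature periodic Pitman map `D`. -/
noncomputable def Dmap [NeZero N] (X₁ X₂ : ZMod N → ℝ) (i : ZMod N) : ℝ :=
  X₂ (i + 1) + Real.log ((∑ j : ZMod N, Real.exp (cycOC (Yv X₁ X₂) i j)) /
    (∑ j : ZMod N, Real.exp (cycOC (Yv X₁ X₂) (i - 1) j)))

/-- Zero-temperature periodic Pitman map `T̃`. -/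
noncomputable def Tz [NeZero N] (X₁ X₂ : ZMod N → ℝ) (i : ZMod N) : ℝ :=
  X₁ (i - 1) + Finset.univ.sup' Finset.univ_nonempty (fun j => cycCC (Yv X₁ X₂) (i - 1) j)
    - Finset.univ.sup' Finset.univ_nonempty (fun j => cycCC (Yv X₁ X₂) i j)

/-- Zero-temperature periodic Pitman map `D̃`. -/
noncomputable def Dz [NeZero N] (X₁ X₂ : ZMod N → ℝ) (i : ZMod N) : ℝ :=
  X₂ (i + 1) + Finset.univ.sup' Finset.univ_nonempty (fun j => cycOC (Yv X₁ X₂) i j)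
    - Finset.univ.sup' Finset.univ_nonempty (fun j => cycOC (Yv X₁ X₂) (i - 1) j)

/-- Upper-triangular `ℤ×ℤ` matrix `H(x)` with `H(x)_{i,j} = e^{xᵢ + ⋯ + xⱼ}` for `i ≤ j`. -/
noncomputable def HmatZ (x : ℤ → ℝ) : ℤ → ℤ → ℝ :=
  fun i j => if i ≤ j then Real.exp (∑ s ∈ Finset.Icc i j, x s) else 0

/-- Entrywise product of upper-triangular `ℤ×ℤ` matrices (each entry is a finite sum). -/
noncomputable def mulUT (A B : ℤ → ℤ → ℝ) : ℤ → ℤ → ℝ :=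
  fun i j => ∑ k ∈ Finset.Icc i j, A i k * B k j

namespace HmatAux

noncomputable def pot [NeZero N] (w : ZMod N → ℝ) (n : ℤ) : ℝ :=
  ∑ s ∈ Finset.Ico (0:ℤ) n, w ((s+1 : ℤ) : ZMod N)
    - ∑ s ∈ Finset.Ico n (0:ℤ), w ((s+1 : ℤ) : ZMod N)

lemma pot_succ [NeZero N] (w : ZMod N → ℝ) (n : ℤ) :
    pot w (n+1) = pot w n + w ((n+1 : ℤ) : ZMod N) := by
  unfold pot
  rcases le_or_gt 0 n with h | h
  · have e0 : Finset.Ico (0:ℤ) (n+1) = insert n (Finset.Ico (0:ℤ) n) := by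
      ext x; simp only [Finset.mem_Ico, Finset.mem_insert]; omega
    have e1 : Finset.Ico n (0:ℤ) = ∅ := Finset.Ico_eq_empty (by omega)
    have e2 : Finset.Ico (n+1) (0:ℤ) = ∅ := Finset.Ico_eq_empty (by omega)
    rw [e0, e1, e2, Finset.sum_insert (by simp)]
    ring
  · have e0 : Finset.Ico n (0:ℤ) = insert n (Finset.Ico (n+1) (0:ℤ)) := by
      ext x; simp only [Finset.mem_Ico, Finset.mem_insert]; omega
    have e1 : Finset.Ico (0:ℤ) n = ∅ := Finset.Ico_eq_empty (by omega)
    have e2 : Finset.Ico (0:ℤ) (n+1) = ∅ := Finset.Ico_eq_empty (by omega)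
    rw [e0, e1, e2, Finset.sum_insert (by simp)]
    ring

lemma Icc_insert_top (i n : ℤ) (h : i ≤ n + 1) :
    Finset.Icc i (n+1) = insert (n+1) (Finset.Icc i n) := by
  ext x; simp only [Finset.mem_Icc, Finset.mem_insert]; omega

lemma teleSum (F : ℤ → ℝ) (i : ℤ) :
    ∀ k, i ≤ k → ∑ s ∈ Finset.Icc i k, (F s - F (s-1)) = F k - F (i-1) := by
  refine Int.le_induction ?_ ?_
  · rw [Finset.Icc_self, Finset.sum_singleton]
  · intro n hn ih
    rw [Icc_insert_top i n (by omega), Finset.sum_insert (by simp), ih]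
    have : (n + 1 - 1 : ℤ) = n := by ring
    rw [this]; ring

lemma sum_w [NeZero N] (w : ZMod N → ℝ) (i k : ℤ) (h : i ≤ k) :
    ∑ s ∈ Finset.Icc i k, w ((s : ℤ) : ZMod N) = pot w k - pot w (i-1) := by
  rw [← teleSum (pot w) i k h]
  apply Finset.sum_congr rfl
  intro s _
  have h2 := pot_succ w (s-1)
  rw [show s - 1 + 1 = s by ring] at h2
  rw [h2]; ring

variable [NeZero N] (W₁ W₂ : ZMod N → ℝ)

noncomputable def Zf (n : ℤ) : ℝ := pot W₁ n - pot W₂ (n-1)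

noncomputable def gf (n : ℤ) : ℝ := ∑ m ∈ Finset.range N, Real.exp (Zf W₁ W₂ (n + m))

lemma gpos (n : ℤ) : 0 < gf W₁ W₂ n := by
  apply Finset.sum_pos (fun m _ => Real.exp_pos _)
  rw [Finset.nonempty_range_iff]
  exact NeZero.ne N

lemma Zstep (n : ℤ) : Zf W₁ W₂ (n+1) - Zf W₁ W₂ n = Yv W₂ W₁ ((n : ℤ) : ZMod N) := by
  unfold Zf Yv
  have h1 := pot_succ W₁ n
  have h2 := pot_succ W₂ (n-1)
  rw [show (n - 1 + 1 : ℤ) = n by ring] at h2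
  rw [show (n + 1 - 1 : ℤ) = n by ring, h1, h2]
  push_cast
  ring

lemma cyc_sum (s : ℤ) (m : ℕ) :
    ∑ ℓ ∈ Finset.range m, Yv W₂ W₁ (((s : ℤ) : ZMod N) + ℓ) = Zf W₁ W₂ (s + m) - Zf W₁ W₂ s := by
  induction m with
  | zero => simp
  | succ m ih =>
      rw [Finset.sum_range_succ, ih]
      have h := Zstep W₁ W₂ (s + m)
      have hc : (((s : ℤ) : ZMod N) + (m : ℕ)) = (((s + m : ℤ)) : ZMod N) := by push_cast; ring
      rw [hc, ← h]
      push_cast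
      ring_nf

lemma sum_zmod_range (a : ℤ) (f : ZMod N → ℝ) :
    ∑ t : ZMod N, f t = ∑ ℓ ∈ Finset.range N, f (((a : ℤ) : ZMod N) + ℓ) := by
  apply Finset.sum_bij' (fun t _ => (t - ((a:ℤ) : ZMod N)).val)
    (fun ℓ _ => ((a:ℤ) : ZMod N) + ℓ)
  · intro t _; exact Finset.mem_range.2 (ZMod.val_lt _)
  · intro ℓ _; exact Finset.mem_univ _
  · intro t _
    rw [ZMod.natCast_rightInverse _]; ring
  · intro ℓ hℓ
    rw [add_sub_cancel_left, ZMod.val_natCast_of_lt (Finset.mem_range.1 hℓ)]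
  · intro t _
    rw [ZMod.natCast_rightInverse _]; ring_nf

noncomputable def Sf (s : ℤ) : ℝ := Real.exp (-(Zf W₁ W₂ s)) * gf W₁ W₂ (s+1)

noncomputable def Rf (s : ℤ) : ℝ := Real.exp (-(Zf W₁ W₂ (s+1))) * gf W₁ W₂ (s+1)

lemma Sf_pos (s : ℤ) : 0 < Sf W₁ W₂ s := mul_pos (Real.exp_pos _) (gpos W₁ W₂ _)

lemma Rf_pos (s : ℤ) : 0 < Rf W₁ W₂ s := mul_pos (Real.exp_pos _) (gpos W₁ W₂ _)

lemma S_eq (s : ℤ) :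
    ∑ j : ZMod N, Real.exp (cycCC (Yv W₂ W₁) ((s:ℤ) : ZMod N) j)
      = Sf W₁ W₂ s := by
  rw [Sf, sum_zmod_range s]
  rw [gf, Finset.mul_sum]
  apply Finset.sum_congr rfl
  intro ℓ hℓ
  have hval : ((((s:ℤ):ZMod N) + ℓ) - ((s:ℤ):ZMod N)).val = ℓ := by
    rw [add_sub_cancel_left, ZMod.val_natCast_of_lt (Finset.mem_range.1 hℓ)]
  rw [cycCC, hval, cyc_sum W₁ W₂ s (ℓ+1), ← Real.exp_add]
  congr 1
  push_cast
  ring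

lemma R_eq (s : ℤ) :
    ∑ j : ZMod N, Real.exp (cycOC (Yv W₂ W₁) ((s:ℤ) : ZMod N) j)
      = Rf W₁ W₂ s := by
  rw [Rf, sum_zmod_range s]
  rw [gf, Finset.mul_sum]
  apply Finset.sum_congr rfl
  intro ℓ hℓ
  have hval : ((((s:ℤ):ZMod N) + ℓ) - ((s:ℤ):ZMod N)).val = ℓ := by
    rw [add_sub_cancel_left, ZMod.val_natCast_of_lt (Finset.mem_range.1 hℓ)]
  have hc : (((s:ℤ) : ZMod N) + 1) = (((s+1:ℤ)) : ZMod N) := by push_cast; ring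
  rw [cycOC, hval]
  have := cyc_sum W₁ W₂ (s+1) ℓ
  rw [show (∑ ℓ' ∈ Finset.range ℓ, Yv W₂ W₁ (((s:ℤ):ZMod N) + 1 + ℓ')) =
      (∑ ℓ' ∈ Finset.range ℓ, Yv W₂ W₁ ((((s+1:ℤ)):ZMod N) + ℓ')) by
    apply Finset.sum_congr rfl; intro x _; rw [hc]]
  rw [this, ← Real.exp_add]
  congr 1
  ring

noncomputable def cc : ℝ := Real.exp (∑ t : ZMod N, Yv W₂ W₁ t)

lemma exp_Zf_add_N (n : ℤ) :
    Real.exp (Zf W₁ W₂ (n + N)) = cc W₁ W₂ * Real.exp (Zf W₁ W₂ n) := by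
  have h : ∑ t : ZMod N, Yv W₂ W₁ t = Zf W₁ W₂ (n + N) - Zf W₁ W₂ n := by
    rw [sum_zmod_range n (Yv W₂ W₁)]; exact cyc_sum W₁ W₂ n N
  rw [cc, ← Real.exp_add]
  congr 1
  linarith

lemma g_succ (n : ℤ) :
    gf W₁ W₂ (n+1) = gf W₁ W₂ n + (cc W₁ W₂ - 1) * Real.exp (Zf W₁ W₂ n) := by
  have key : gf W₁ W₂ (n+1) + Real.exp (Zf W₁ W₂ n)
      = gf W₁ W₂ n + Real.exp (Zf W₁ W₂ (n + N)) := by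
    have hL := Finset.sum_range_succ' (fun m : ℕ => Real.exp (Zf W₁ W₂ (n + m))) N
    have hR := Finset.sum_range_succ (fun m : ℕ => Real.exp (Zf W₁ W₂ (n + m))) N
    have e1 : gf W₁ W₂ (n+1) = ∑ m ∈ Finset.range N,
        Real.exp (Zf W₁ W₂ (n + (m+1 : ℕ))) := by
      rw [gf]; apply Finset.sum_congr rfl; intro m _; congr 1; push_cast; ring
    rw [e1, gf]
    simp only [Nat.cast_zero, add_zero] at hL
    linarith [hL, hR]
  have := exp_Zf_add_N W₁ W₂ n
  linarith [key, this]

lemma Tmap_int (s : ℤ) :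
    Tmap W₂ W₁ ((s:ℤ) : ZMod N)
      = W₂ (((s-1:ℤ)) : ZMod N)
        + (Real.log (Sf W₁ W₂ (s-1)) - Real.log (Sf W₁ W₂ s)) := by
  have hc : ((s:ℤ) : ZMod N) - 1 = (((s-1:ℤ)) : ZMod N) := by push_cast; ring
  rw [Tmap, hc, S_eq, S_eq,
    Real.log_div (Sf_pos W₁ W₂ (s-1)).ne' (Sf_pos W₁ W₂ s).ne']

lemma Dmap_int (s : ℤ) :
    Dmap W₂ W₁ ((s:ℤ) : ZMod N)
      = W₁ (((s+1:ℤ)) : ZMod N)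
        + (Real.log (Rf W₁ W₂ s) - Real.log (Rf W₁ W₂ (s-1))) := by
  have hc : ((s:ℤ) : ZMod N) - 1 = (((s-1:ℤ)) : ZMod N) := by push_cast; ring
  have hc2 : ((s:ℤ) : ZMod N) + 1 = (((s+1:ℤ)) : ZMod N) := by push_cast; ring
  rw [Dmap, hc, hc2, R_eq, R_eq,
    Real.log_div (Rf_pos W₁ W₂ s).ne' (Rf_pos W₁ W₂ (s-1)).ne']

lemma expTsum (i k : ℤ) (h : i ≤ k) :
    Real.exp (∑ s ∈ Finset.Icc i k, Tmap W₂ W₁ ((s:ℤ) : ZMod N))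
      = Real.exp (pot W₂ (k-1) - pot W₂ (i-1-1))
          * (Sf W₁ W₂ (i-1) / Sf W₁ W₂ k) := by
  have hsum : ∑ s ∈ Finset.Icc i k, Tmap W₂ W₁ ((s:ℤ) : ZMod N)
      = (pot W₂ (k-1) - Real.log (Sf W₁ W₂ k))
        - (pot W₂ (i-1-1) - Real.log (Sf W₁ W₂ (i-1))) := by
    rw [← teleSum (fun s => pot W₂ (s-1) - Real.log (Sf W₁ W₂ s)) i k h]
    apply Finset.sum_congr rfl
    intro s _
    have hp := pot_succ W₂ (s-1-1)
    rw [show (s-1-1+1 : ℤ) = s - 1 by ring] at hp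
    rw [Tmap_int W₁ W₂ s, hp]
    ring
  rw [hsum, show (pot W₂ (k-1) - Real.log (Sf W₁ W₂ k))
        - (pot W₂ (i-1-1) - Real.log (Sf W₁ W₂ (i-1)))
      = (pot W₂ (k-1) - pot W₂ (i-1-1))
        + (Real.log (Sf W₁ W₂ (i-1)) - Real.log (Sf W₁ W₂ k)) by ring,
    Real.exp_add, Real.exp_sub, Real.exp_sub, Real.exp_log (Sf_pos W₁ W₂ (i-1)),
    Real.exp_log (Sf_pos W₁ W₂ k)]

lemma expDsum (k j : ℤ) (h : k ≤ j) :
    Real.exp (∑ s ∈ Finset.Icc k j, Dmap W₂ W₁ ((s:ℤ) : ZMod N))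
      = Real.exp (pot W₁ (j+1) - pot W₁ (k-1+1))
          * (Rf W₁ W₂ j / Rf W₁ W₂ (k-1)) := by
  have hsum : ∑ s ∈ Finset.Icc k j, Dmap W₂ W₁ ((s:ℤ) : ZMod N)
      = (pot W₁ (j+1) + Real.log (Rf W₁ W₂ j))
        - (pot W₁ (k-1+1) + Real.log (Rf W₁ W₂ (k-1))) := by
    rw [← teleSum (fun s => pot W₁ (s+1) + Real.log (Rf W₁ W₂ s)) k j h]
    apply Finset.sum_congr rfl
    intro s _
    have hp := pot_succ W₁ s
    rw [show (s-1+1 : ℤ) = s by ring, hp]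
    rw [Dmap_int W₁ W₂ s]
    ring
  rw [hsum, show (pot W₁ (j+1) + Real.log (Rf W₁ W₂ j))
        - (pot W₁ (k-1+1) + Real.log (Rf W₁ W₂ (k-1)))
      = (pot W₁ (j+1) - pot W₁ (k-1+1))
        + (Real.log (Rf W₁ W₂ j) - Real.log (Rf W₁ W₂ (k-1))) by ring,
    Real.exp_add, Real.exp_sub, Real.exp_sub, Real.exp_log (Rf_pos W₁ W₂ j),
    Real.exp_log (Rf_pos W₁ W₂ (k-1))]

lemma gdiff (i : ℤ) :
    ∀ j, i ≤ j → gf W₁ W₂ (j+1)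
      = gf W₁ W₂ i + (cc W₁ W₂ - 1) * ∑ k ∈ Finset.Icc i j, Real.exp (Zf W₁ W₂ k) := by
  refine Int.le_induction ?_ ?_
  · rw [Finset.Icc_self, Finset.sum_singleton]
    have := g_succ W₁ W₂ i
    linarith
  · intro n hn ih
    rw [Icc_insert_top i n (by omega), Finset.sum_insert (by simp)]
    have := g_succ W₁ W₂ (n+1)
    nlinarith [this, ih]

lemma key (i : ℤ) :
    ∀ j, i ≤ j →
    ∑ k ∈ Finset.Icc i j, (Real.exp (Zf W₁ W₂ k) / (gf W₁ W₂ k * gf W₁ W₂ (k+1)))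
      = (∑ k ∈ Finset.Icc i j, Real.exp (Zf W₁ W₂ k)) / (gf W₁ W₂ i * gf W₁ W₂ (j+1)) := by
  refine Int.le_induction ?_ ?_
  · rw [Finset.Icc_self, Finset.sum_singleton, Finset.sum_singleton]
  · intro n hn ih
    rw [Icc_insert_top i n (by omega), Finset.sum_insert (by simp),
      Finset.sum_insert (by simp), ih]
    set A := ∑ k ∈ Finset.Icc i n, Real.exp (Zf W₁ W₂ k) with hA
    set e := Real.exp (Zf W₁ W₂ (n+1)) with he
    have hg2 : gf W₁ W₂ (n+1+1) = gf W₁ W₂ (n+1) + (cc W₁ W₂ - 1) * e := g_succ W₁ W₂ (n+1)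
    have hg1 : gf W₁ W₂ (n+1) = gf W₁ W₂ i + (cc W₁ W₂ - 1) * A := gdiff W₁ W₂ i n hn
    have p0 : (0:ℝ) < gf W₁ W₂ i := gpos W₁ W₂ i
    have p1 : (0:ℝ) < gf W₁ W₂ (n+1) := gpos W₁ W₂ (n+1)
    have p2 : (0:ℝ) < gf W₁ W₂ (n+1+1) := gpos W₁ W₂ (n+1+1)
    have hmain : A * gf W₁ W₂ (n+1+1) + e * gf W₁ W₂ i = (e + A) * gf W₁ W₂ (n+1) := by
      linear_combination A * hg2 - e * hg1
    field_simp
    linear_combination hmain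

end HmatAux

/-- `H(W₁)·H(W₂) = H(T(W₂,W₁))·H(D(W₂,W₁))` for `N`-periodically extended vectors. -/
theorem HmatZ_mul_pitman [NeZero N] (W₁ W₂ : ZMod N → ℝ) :
    mulUT (HmatZ fun s : ℤ => W₁ (s : ZMod N)) (HmatZ fun s : ℤ => W₂ (s : ZMod N)) =
      mulUT (HmatZ fun s : ℤ => Tmap W₂ W₁ (s : ZMod N))
        (HmatZ fun s : ℤ => Dmap W₂ W₁ (s : ZMod N)) := by
  funext i j
  simp only [mulUT]
  rcases le_or_gt i j with hij | hij
  · have hL : ∑ k ∈ Finset.Icc i j,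
        (HmatZ fun s : ℤ => W₁ (s : ZMod N)) i k * (HmatZ fun s : ℤ => W₂ (s : ZMod N)) k j
        = Real.exp (HmatAux.pot W₂ j - HmatAux.pot W₁ (i-1))
            * ∑ k ∈ Finset.Icc i j, Real.exp (HmatAux.Zf W₁ W₂ k) := by
      rw [Finset.mul_sum]
      apply Finset.sum_congr rfl
      intro k hk
      obtain ⟨hik, hkj⟩ := Finset.mem_Icc.1 hk
      simp only [HmatZ, if_pos hik, if_pos hkj]
      rw [HmatAux.sum_w W₁ i k hik, HmatAux.sum_w W₂ k j hkj]
      simp only [HmatAux.Zf, Real.exp_sub]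
      ring
    have hR : ∑ k ∈ Finset.Icc i j,
        (HmatZ fun s : ℤ => Tmap W₂ W₁ (s : ZMod N)) i k *
          (HmatZ fun s : ℤ => Dmap W₂ W₁ (s : ZMod N)) k j
        = Real.exp (HmatAux.pot W₂ j - HmatAux.pot W₁ (i-1))
            * ((HmatAux.gf W₁ W₂ i * HmatAux.gf W₁ W₂ (j+1))
              * ∑ k ∈ Finset.Icc i j,
                  (Real.exp (HmatAux.Zf W₁ W₂ k)
                    / (HmatAux.gf W₁ W₂ k * HmatAux.gf W₁ W₂ (k+1)))) := by
      rw [Finset.mul_sum, Finset.mul_sum]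
      apply Finset.sum_congr rfl
      intro k hk
      obtain ⟨hik, hkj⟩ := Finset.mem_Icc.1 hk
      simp only [HmatZ, if_pos hik, if_pos hkj]
      rw [HmatAux.expTsum W₁ W₂ i k hik, HmatAux.expDsum W₁ W₂ k j hkj]
      have hgk := (HmatAux.gpos W₁ W₂ k).ne'
      have hgk1 := (HmatAux.gpos W₁ W₂ (k+1)).ne'
      have hgi := (HmatAux.gpos W₁ W₂ i).ne'
      have hgj1 := (HmatAux.gpos W₁ W₂ (j+1)).ne'
      simp only [HmatAux.Sf, HmatAux.Rf, HmatAux.Zf, Real.exp_sub, Real.exp_neg]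
      rw [show (i-1+1 : ℤ) = i by ring, show (k-1+1 : ℤ) = k by ring,
        show (j+1-1 : ℤ) = j by ring]
      field_simp
    rw [hL, hR, HmatAux.key W₁ W₂ i j hij]
    have h1 := (HmatAux.gpos W₁ W₂ i).ne'
    have h2 := (HmatAux.gpos W₁ W₂ (j+1)).ne'
    field_simp
  · rw [Finset.Icc_eq_empty (by omega)]
    simp
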